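/- Let T > 0, let p*, p_min, p_tail ≥ 0 and ζ ≥ 0 satisfy 0 < p_min ≤ p* and (1 + 2ζ/5)·p_tail < p_min, and let λ*, θ ∈ ℝ. Suppose real numbers g₁, g₂ satisfy: g₁ ≤ p*·exp(−T²(λ* − θ)²/2) + p_tail + ζ p_tail/5; g₂ ≥ p* − ζ p_tail/10; and g₁ ≥ g₂ − ζ p_tail/10. Then |λ* − θ| ≤ (1/T)·( −2·log(1 − (1 + 2ζ/5)·p_tail/p_min) )^{1/2}. -/

import Mathlib

open Real

theorem rough_localization_bound
    (T pstar pmin ptail ζ : ℝ) (hT : 0 < T)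
    (hpstar : 0 ≤ pstar) (hpmin0 : 0 < pmin) (hpminstar : pmin ≤ pstar)
    (hptail : 0 ≤ ptail) (hζ : 0 ≤ ζ)
    (hlt : (1 + 2 * ζ / 5) * ptail < pmin)
    (lamstar θ g₁ g₂ : ℝ)
    (hg₁ : g₁ ≤ pstar * Real.exp (-(T ^ 2 * (lamstar - θ) ^ 2) / 2) + ptail + ζ * ptail / 5)
    (hg₂ : pstar - ζ * ptail / 10 ≤ g₂)
    (hg₁₂ : g₂ - ζ * ptail / 10 ≤ g₁) :
    |lamstar - θ| ≤
      (1 / T) * Real.sqrt (-2 * Real.log (1 - (1 + 2 * ζ / 5) * ptail / pmin)) := by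
  set d := lamstar - θ with hd
  set X := -(T ^ 2 * d ^ 2) / 2 with hX
  set c := (1 + 2 * ζ / 5) * ptail with hc
  have hc0 : 0 ≤ c := by
    apply mul_nonneg _ hptail
    nlinarith
  have hpstar0 : 0 < pstar := lt_of_lt_of_le hpmin0 hpminstar
  have hA0 : 0 < 1 - c / pmin := by
    have : c / pmin < 1 := (div_lt_one hpmin0).mpr hlt
    linarith
  -- pstar * exp X ≥ pstar - c
  have key : pstar - c ≤ pstar * Real.exp X := by
    have : ζ * ptail / 10 ≥ 0 := by positivity
    nlinarith [hg₁, hg₂, hg₁₂]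
  have h1 : 1 - c / pmin ≤ Real.exp X := by
    have h2 : 1 - c / pstar ≤ Real.exp X := by
      rw [sub_div' (ne_of_gt hpstar0)] at *
      rw [div_le_iff₀ hpstar0]
      nlinarith [key]
    have h3 : c / pstar ≤ c / pmin := div_le_div_of_nonneg_left hc0 hpmin0 hpminstar
    linarith
  have hlog : Real.log (1 - c / pmin) ≤ X := by
    calc Real.log (1 - c / pmin) ≤ Real.log (Real.exp X) :=
          Real.log_le_log hA0 h1
      _ = X := Real.log_exp X
  have hS : T ^ 2 * d ^ 2 ≤ -2 * Real.log (1 - c / pmin) := by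
    rw [hX] at hlog; linarith
  have hTd : T * |d| ≤ Real.sqrt (-2 * Real.log (1 - c / pmin)) := by
    rw [show T * |d| = Real.sqrt ((T * |d|) ^ 2) by
      rw [Real.sqrt_sq (by positivity)]]
    apply Real.sqrt_le_sqrt
    rw [mul_pow, sq_abs]
    exact hS
  calc |d| = (1 / T) * (T * |d|) := by field_simp
    _ ≤ (1 / T) * Real.sqrt (-2 * Real.log (1 - c / pmin)) := by
        apply mul_le_mul_of_nonneg_left hTd (by positivity)
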